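/- Every non-minimal M-system (X,T) is broken F_ps-n-sensitive for every n ≥ 2. -/
import Mathlib


open Filter Topology MeasureTheory

variable {X : Type} [MetricSpace X]

def orbit (T : X → X) (x : X) : Set X := Set.range fun n : ℕ => T^[n] x

def IsTransitiveSys (T : X → X) : Prop :=
  ∀ U V : Set X, IsOpen U → U.Nonempty → IsOpen V → V.Nonempty →
    {n : ℕ | (U ∩ T^[n] ⁻¹' V).Nonempty}.Infinite

def MinimalPoint (T : X → X) (x : X) : Prop :=
  ∀ y ∈ closure (orbit T x), x ∈ closure (orbit T y)

def MinimalSys (T : X → X) : Prop := ∀ x : X, Dense (orbit T x)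

def IsMinimalSubset (T : X → X) (M : Set X) : Prop :=
  M.Nonempty ∧ IsClosed M ∧ Set.MapsTo T M M ∧
    ∀ M' ⊆ M, M'.Nonempty → IsClosed M' → Set.MapsTo T M' M' → M' = M

noncomputable def ubd (F : Set ℕ) : ℝ :=
  Filter.limsup (fun N : ℕ => ⨆ m : ℕ, ((F ∩ Set.Ico m (m + N)).ncard : ℝ) / N) atTop

noncomputable def lbd (F : Set ℕ) : ℝ :=
  Filter.liminf (fun N : ℕ => ⨅ m : ℕ, ((F ∩ Set.Ico m (m + N)).ncard : ℝ) / N) atTop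

def Syndetic (F : Set ℕ) : Prop := ∃ N : ℕ, ∀ k : ℕ, ∃ j ∈ F, k ≤ j ∧ j ≤ k + N

def Thick (F : Set ℕ) : Prop := ∀ l : ℕ, ∃ m : ℕ, Set.Icc m (m + l) ⊆ F

def PiecewiseSyndetic (F : Set ℕ) : Prop := ∃ A B : Set ℕ, Thick A ∧ Syndetic B ∧ F = A ∩ B

def Fps : Set (Set ℕ) := {F | PiecewiseSyndetic F}
def Fpubd : Set (Set ℕ) := {F | 0 < ubd F}
def Finf : Set (Set ℕ) := {F | F.Infinite}

def FursFamily (S : Set (Set ℕ)) : Prop := ∀ F₁ F₂ : Set ℕ, F₁ ⊆ F₂ → F₁ ∈ S → F₂ ∈ S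

def FamRecurrent {Z : Type} [MetricSpace Z] (S : Set (Set ℕ)) (T : Z → Z) (x : Z) : Prop :=
  ∀ U : Set Z, IsOpen U → x ∈ U → {n : ℕ | T^[n] x ∈ U} ∈ S

def BrokenSensitive (T : X → X) (S : Set (Set ℕ)) (n : ℕ) : Prop :=
  ∃ δ > (0:ℝ), ∃ F₀ ∈ S, ∀ U : Set X, IsOpen U → U.Nonempty → ∀ l : ℕ,
    ∃ x : Fin n → X, (∀ i, x i ∈ U) ∧ ∃ m : ℕ,
      ∀ k ∈ F₀ ∩ Set.Icc 1 l, ∀ i j : Fin n, i ≠ j →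
        δ < dist (T^[m + k] (x i)) (T^[m + k] (x j))

def SensitiveTuple (T : X → X) {n : ℕ} (x : Fin n → X) : Prop :=
  ∀ U : Set X, IsOpen U → U.Nonempty →
    ∀ V : Fin n → Set X, (∀ i, IsOpen (V i) ∧ x i ∈ V i) →
      ∃ y : Fin n → X, (∀ i, y i ∈ U) ∧ ∃ m : ℕ, ∀ i, T^[m] (y i) ∈ V i

def EssentialSensitiveTuple (T : X → X) {n : ℕ} (x : Fin n → X) : Prop :=
  Function.Injective x ∧ SensitiveTuple T x

def prodMap (T : X → X) (n : ℕ) : (Fin n → X) → Fin n → X := fun x i => T (x i)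

def BlockilyThickly (T : X → X) (n : ℕ) : Prop :=
  ∃ δ > (0:ℝ), ∀ k : ℕ, ∀ U : Set X, IsOpen U → U.Nonempty →
    ∃ x : Fin n → X, (∀ i, x i ∈ U) ∧ ∃ m : ℕ, ∀ l ≤ k, ∀ i j : Fin n, i ≠ j →
      δ < dist (T^[m + l] (x i)) (T^[m + l] (x j))

def WeaklyMixing (T : X → X) : Prop :=
  IsTransitiveSys (fun p : X × X => (T p.1, T p.2))

def TopologicallyErgodic (T : X → X) : Prop :=
  ∀ U V : Set X, IsOpen U → U.Nonempty → IsOpen V → V.Nonempty →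
    Syndetic {m : ℕ | (T^[m] ⁻¹' U ∩ V).Nonempty}

def MeanEquicontinuous (T : X → X) : Prop :=
  ∀ ε > (0:ℝ), ∃ δ > (0:ℝ), ∀ x y : X, dist x y < δ →
    Filter.limsup (fun m : ℕ => (∑ k ∈ Finset.range m, dist (T^[k] x) (T^[k] y)) / m) atTop < ε

def BanachProximal (T : X → X) (x y : X) : Prop :=
  ∀ ε > (0:ℝ), ubd {m : ℕ | ε ≤ dist (T^[m] x) (T^[m] y)} = 0

def EquicontinuousSys (T : X → X) : Prop :=
  ∀ ε > (0:ℝ), ∃ δ > (0:ℝ), ∀ x y : X, dist x y < δ → ∀ n : ℕ, dist (T^[n] x) (T^[n] y) < ε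

noncomputable def measSupp {Z : Type} [MetricSpace Z] [MeasurableSpace Z] (T : Z → Z) : Set Z :=
  closure (⋃ μ ∈ {μ : Measure Z | IsProbabilityMeasure μ ∧
      ∀ s : Set Z, MeasurableSet s → μ (T ⁻¹' s) = μ s},
    {x : Z | ∀ U : Set Z, IsOpen U → x ∈ U → 0 < μ U})
section BrokenAux

variable [CompactSpace X] {T : X → X}

/-- A minimal point returns to any of its neighborhoods along a syndetic set. -/
lemma aux_minpoint_syndetic (hT : Continuous T) {p : X} (hp : MinimalPoint T p)
    {O : Set X} (hO : IsOpen O) (hpO : p ∈ O) :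
    Syndetic {s : ℕ | T^[s] p ∈ O} := by
  have hcover : closure (orbit T p) ⊆ ⋃ s : ℕ, T^[s] ⁻¹' O := by
    intro y hy
    have h1 : (O ∩ orbit T y).Nonempty := mem_closure_iff.1 (hp y hy) O hO hpO
    obtain ⟨z, hzO, s, rfl⟩ := h1
    exact Set.mem_iUnion.2 ⟨s, hzO⟩
  have hcomp : IsCompact (closure (orbit T p)) := isClosed_closure.isCompact
  obtain ⟨t, ht⟩ := hcomp.elim_finite_subcover (fun s : ℕ => T^[s] ⁻¹' O)
      (fun s => hO.preimage (hT.iterate s)) hcover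
  refine ⟨t.sup id, fun k => ?_⟩
  have hk : T^[k] p ∈ closure (orbit T p) := subset_closure ⟨k, rfl⟩
  obtain ⟨s, hst, hs⟩ := Set.mem_iUnion₂.1 (ht hk)
  refine ⟨k + s, ?_, Nat.le_add_right k s, ?_⟩
  · show T^[k + s] p ∈ O
    rw [add_comm, Function.iterate_add_apply]
    exact hs
  · exact Nat.add_le_add_left (Finset.le_sup (f := id) hst) k

/-- Topological ergodicity of M-systems. -/
lemma aux_ergodic (hT : Continuous T) (htr : IsTransitiveSys T)
    (hdense : Dense {x : X | MinimalPoint T x})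
    {U V : Set X} (hU : IsOpen U) (hUne : U.Nonempty) (hV : IsOpen V) (hVne : V.Nonempty) :
    Syndetic {m : ℕ | ∃ x ∈ U, T^[m] x ∈ V} := by
  obtain ⟨tm, htm⟩ := (htr U V hU hUne hV hVne).nonempty
  have hOopen : IsOpen (U ∩ T^[tm] ⁻¹' V) := hU.inter (hV.preimage (hT.iterate tm))
  obtain ⟨p, hpmin, hpO⟩ := hdense.exists_mem_open hOopen htm
  obtain ⟨N, hN⟩ := aux_minpoint_syndetic hT hpmin hOopen hpO
  refine ⟨N + tm, fun k => ?_⟩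
  obtain ⟨s, hsO, hks, hsN⟩ := hN k
  have hsO' : T^[s] p ∈ U ∩ T^[tm] ⁻¹' V := hsO
  refine ⟨s + tm, ⟨p, hpO.1, ?_⟩, by omega, by omega⟩
  rw [add_comm, Function.iterate_add_apply]
  exact hsO'.2

/-- Finitely many pairwise disjoint nonempty closed invariant sets cannot cover a
transitive space (as soon as there are at least two of them). -/
lemma aux_cover_ne_univ (htr : IsTransitiveSys T) {r : ℕ} (hr : 2 ≤ r)
    (K : Fin r → Set X) (hne : ∀ i, (K i).Nonempty) (hcl : ∀ i, IsClosed (K i))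
    (hmap : ∀ i, Set.MapsTo T (K i) (K i))
    (hdisj : ∀ i j, i ≠ j → Disjoint (K i) (K j)) :
    (⋃ i, K i) ≠ Set.univ := by
  intro h
  have h0 : (0 : ℕ) < r := by omega
  have h1 : (1 : ℕ) < r := by omega
  set i₀ : Fin r := ⟨0, h0⟩ with hi₀
  set i₁ : Fin r := ⟨1, h1⟩ with hi₁
  have hi01 : i₀ ≠ i₁ := by simp [hi₀, hi₁, Fin.ext_iff]
  have hmem : ∀ x : X, ∃ j, x ∈ K j := fun x =>
    Set.mem_iUnion.1 (h ▸ Set.mem_univ x)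
  have key : ∀ i : Fin r, IsOpen ((⋃ j ∈ {j : Fin r | j ≠ i}, K j)ᶜ) ∧
      (∀ x ∈ (⋃ j ∈ {j : Fin r | j ≠ i}, K j)ᶜ, x ∈ K i) ∧
      K i ⊆ (⋃ j ∈ {j : Fin r | j ≠ i}, K j)ᶜ := by
    intro i
    refine ⟨(Set.Finite.isClosed_biUnion (Set.toFinite _) fun j _ => hcl j).isOpen_compl,
      ?_, ?_⟩
    · intro x hx
      obtain ⟨j, hj⟩ := hmem x
      rcases eq_or_ne j i with rfl | hne'
      · exact hj
      · exact absurd (Set.mem_biUnion (show j ∈ {j : Fin r | j ≠ i} from hne') hj) hx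
    · intro x hx hmem'
      obtain ⟨j, hjs, hjK⟩ := Set.mem_iUnion₂.1 hmem'
      exact Set.disjoint_left.1 (hdisj j i hjs) hjK hx
  obtain ⟨hU0, hU0K, hK0U⟩ := key i₀
  obtain ⟨hU1, hU1K, hK1U⟩ := key i₁
  obtain ⟨z0, hz0⟩ := hne i₀
  obtain ⟨z1, hz1⟩ := hne i₁
  obtain ⟨m, x, hxU, hxV⟩ := (htr _ _ hU0 ⟨z0, hK0U hz0⟩ hU1 ⟨z1, hK1U hz1⟩).nonempty
  have hA : T^[m] x ∈ K i₀ := (hmap i₀).iterate m (hU0K x hxU)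
  have hB : T^[m] x ∈ K i₁ := hU1K _ hxV
  exact Set.disjoint_left.1 (hdisj i₀ i₁ hi01) hA hB

/-- In a non-minimal M-system there exist, for every `r`, `r+1` pairwise disjoint
nonempty closed invariant subsets. -/
lemma aux_family (hT : Continuous T) (htr : IsTransitiveSys T)
    (hdense : Dense {x : X | MinimalPoint T x}) {x₀ : X} (hx₀ : ¬ Dense (orbit T x₀)) :
    ∀ r : ℕ, ∃ K : Fin (r + 1) → Set X, (∀ i, (K i).Nonempty) ∧ (∀ i, IsClosed (K i)) ∧
      (∀ i, Set.MapsTo T (K i) (K i)) ∧ (∀ i j, i ≠ j → Disjoint (K i) (K j)) ∧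
      (⋃ i, K i) ≠ Set.univ := by
  have horb : ∀ y : X, Set.MapsTo T (closure (orbit T y)) (closure (orbit T y)) := by
    intro y
    have h1 : Set.MapsTo T (orbit T y) (orbit T y) := by
      rintro z ⟨k, rfl⟩
      exact ⟨k + 1, by simp [Function.iterate_succ_apply']⟩
    exact h1.closure hT
  have hsub : ∀ (y : X) (S : Set X), IsClosed S → Set.MapsTo T S S → y ∈ S →
      closure (orbit T y) ⊆ S := by
    intro y S hSc hSm hyS
    refine closure_minimal ?_ hSc
    rintro z ⟨k, rfl⟩
    exact hSm.iterate k hyS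
  intro r
  induction r with
  | zero =>
    refine ⟨fun _ => closure (orbit T x₀), fun i => ⟨x₀, subset_closure ⟨0, rfl⟩⟩,
      fun _ => isClosed_closure, fun _ => horb x₀,
      fun i j hij => absurd (Fin.ext (by have := i.isLt; have := j.isLt; omega)) hij, ?_⟩
    rw [Set.iUnion_const]
    intro hEq
    exact hx₀ (dense_iff_closure_eq.2 hEq)
  | succ r IH =>
    obtain ⟨K, hne, hcl, hmap, hdisj, hUn⟩ := IH
    have hopen : IsOpen ((⋃ i, K i)ᶜ) :=
      (isClosed_iUnion_of_finite fun i => hcl i).isOpen_compl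
    have hcne : ((⋃ i, K i)ᶜ).Nonempty := Set.nonempty_compl.2 hUn
    obtain ⟨p, hpmin, hpC⟩ := hdense.exists_mem_open hopen hcne
    set K' : Fin (r + 2) → Set X := Fin.snoc K (closure (orbit T p)) with hK'
    have hKlast : K' (Fin.last (r + 1)) = closure (orbit T p) := by
      simp [hK', Fin.snoc_last]
    have hKcast : ∀ i : Fin (r + 1), K' i.castSucc = K i := by
      intro i; simp [hK', Fin.snoc_castSucc]
    have hdisjP : ∀ i : Fin (r + 1), Disjoint (closure (orbit T p)) (K i) := by
      intro i
      rw [Set.disjoint_left]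
      intro y hy1 hy2
      have hpKi : p ∈ K i :=
        hsub y (K i) (hcl i) (hmap i) hy2 (hpmin y hy1)
      exact hpC (Set.mem_iUnion.2 ⟨i, hpKi⟩)
    have hne' : ∀ i, (K' i).Nonempty := by
      intro i
      induction i using Fin.lastCases with
      | last => rw [hKlast]; exact ⟨p, subset_closure ⟨0, rfl⟩⟩
      | cast i => rw [hKcast]; exact hne i
    have hcl' : ∀ i, IsClosed (K' i) := by
      intro i
      induction i using Fin.lastCases with
      | last => rw [hKlast]; exact isClosed_closure
      | cast i => rw [hKcast]; exact hcl i
    have hmap' : ∀ i, Set.MapsTo T (K' i) (K' i) := by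
      intro i
      induction i using Fin.lastCases with
      | last => rw [hKlast]; exact horb p
      | cast i => rw [hKcast]; exact hmap i
    have hdisj' : ∀ i j, i ≠ j → Disjoint (K' i) (K' j) := by
      intro i j hij
      induction i using Fin.lastCases with
      | last =>
        induction j using Fin.lastCases with
        | last => exact absurd rfl hij
        | cast j => rw [hKlast, hKcast]; exact hdisjP j
      | cast i =>
        induction j using Fin.lastCases with
        | last => rw [hKlast, hKcast]; exact (hdisjP i).symm
        | cast j =>
          rw [hKcast, hKcast]
          exact hdisj i j (fun hEq => hij (by rw [hEq]))
    exact ⟨K', hne', hcl', hmap', hdisj',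
      aux_cover_ne_univ htr (by omega) K' hne' hcl' hmap' hdisj'⟩

/-- The common hitting-time lemma: the times at which, for each `i < r`, some point of `U`
tracks `G i` for `L` consecutive steps, form a syndetic set. -/
lemma aux_syndetic_inter (hT : Continuous T) (htr : IsTransitiveSys T)
    (hdense : Dense {x : X | MinimalPoint T x})
    {U : Set X} (hU : IsOpen U) (hUne : U.Nonempty)
    {n : ℕ} (K G : Fin n → Set X) (hKne : ∀ i, (K i).Nonempty)
    (hmap : ∀ i, Set.MapsTo T (K i) (K i)) (hGo : ∀ i, IsOpen (G i))
    (hKG : ∀ i, K i ⊆ G i) :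
    ∀ r L : ℕ,
      Syndetic {m : ℕ | ∀ i : Fin n, (i : ℕ) < r → ∃ x ∈ U, ∀ s ≤ L, T^[m + s] x ∈ G i} := by
  intro r
  induction r with
  | zero =>
    intro L
    exact ⟨0, fun k => ⟨k, fun i hi => absurd hi (Nat.not_lt_zero _), le_refl k, by omega⟩⟩
  | succ r IH =>
    intro L
    by_cases hr : r < n
    · set ir : Fin n := ⟨r, hr⟩ with hir
      set W : Set X := ⋂ s ∈ Finset.range (L + 1), T^[s] ⁻¹' G ir with hWdef
      have hWo : IsOpen W :=
        isOpen_biInter_finset fun s _ => (hGo ir).preimage (hT.iterate s)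
      have hWne : W.Nonempty := by
        obtain ⟨z, hz⟩ := hKne ir
        exact ⟨z, Set.mem_biInter fun s _ => hKG ir ((hmap ir).iterate s hz)⟩
      obtain ⟨N, hN⟩ := aux_ergodic hT htr hdense hU hUne hWo hWne
      obtain ⟨N', hN'⟩ := IH (L + N)
      refine ⟨N' + N, fun k => ?_⟩
      obtain ⟨m', hm'Q, hkm', hm'N⟩ := hN' k
      obtain ⟨j, hjR, hmj, hjN⟩ := hN m'
      refine ⟨j, ?_, by omega, by omega⟩
      intro i hi
      rcases Nat.lt_or_ge (i : ℕ) r with hlt | hge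
      · obtain ⟨x, hxU, hx⟩ := hm'Q i hlt
        refine ⟨x, hxU, fun s hs => ?_⟩
        have e : j + s = m' + (j - m' + s) := by omega
        rw [e]
        exact hx _ (by omega)
      · have hv : (i : ℕ) = r := by omega
        have hieq : i = ir := Fin.ext hv
        subst hieq
        obtain ⟨x, hxU, hxW⟩ := hjR
        refine ⟨x, hxU, fun s hs => ?_⟩
        have hmem : T^[j] x ∈ T^[s] ⁻¹' G ir :=
          Set.mem_iInter₂.1 hxW s (Finset.mem_range.2 (by omega))
        rw [add_comm, Function.iterate_add_apply]
        exact hmem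
    · obtain ⟨N', hN'⟩ := IH L
      refine ⟨N', fun k => ?_⟩
      obtain ⟨j, hj, h1, h2⟩ := hN' k
      exact ⟨j, fun i _ => hj i (lt_of_lt_of_le i.isLt (not_lt.1 hr)), h1, h2⟩

/-- A uniform positive separation between finitely many pairwise disjoint compact sets. -/
lemma aux_sep {n : ℕ} (hn : 0 < n) (K : Fin n → Set X)
    (hcl : ∀ i, IsClosed (K i)) (hne : ∀ i, (K i).Nonempty)
    (hdisj : ∀ i j, i ≠ j → Disjoint (K i) (K j)) :
    ∃ d > (0 : ℝ), ∀ i j, i ≠ j → ∀ a ∈ K i, ∀ b ∈ K j, d ≤ dist a b := by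
  have hpair : ∀ p : Fin n × Fin n, ∃ d : ℝ, 0 < d ∧
      (p.1 ≠ p.2 → ∀ a ∈ K p.1, ∀ b ∈ K p.2, d ≤ dist a b) := by
    rintro ⟨i, j⟩
    by_cases hij : i = j
    · exact ⟨1, one_pos, fun h => absurd hij h⟩
    · have hc : IsCompact (K i ×ˢ K j) := ((hcl i).isCompact).prod ((hcl j).isCompact)
      have hne' : (K i ×ˢ K j).Nonempty := (hne i).prod (hne j)
      obtain ⟨z, hz, hzmin⟩ :=
        hc.exists_isMinOn hne' (continuous_dist.continuousOn
          (f := fun q : X × X => dist q.1 q.2))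
      refine ⟨dist z.1 z.2, ?_, fun _ a ha b hb => by simpa using hzmin (Set.mk_mem_prod ha hb)⟩
      refine dist_pos.2 fun hEq => ?_
      exact Set.disjoint_left.1 (hdisj i j hij) hz.1 (hEq ▸ hz.2)
  choose f hf1 hf2 using hpair
  have hnE : (Finset.univ : Finset (Fin n × Fin n)).Nonempty :=
    ⟨(⟨0, hn⟩, ⟨0, hn⟩), Finset.mem_univ _⟩
  refine ⟨Finset.univ.inf' hnE f, ?_, fun i j hij a ha b hb =>
    le_trans (Finset.inf'_le f (Finset.mem_univ (i, j))) (hf2 (i, j) hij a ha b hb)⟩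
  exact (Finset.lt_inf'_iff hnE).2 fun p _ => hf1 p

end BrokenAux

theorem stmt10 [CompactSpace X] (T : X → X) (hT : Continuous T) (hTs : Function.Surjective T)
    (htr : IsTransitiveSys T) (hdense : Dense {x : X | MinimalPoint T x})
    (hnm : ¬ MinimalSys T) :
    ∀ n : ℕ, 2 ≤ n → BrokenSensitive T Fps n := by
  intro n hn
  obtain ⟨x₀, hx₀⟩ := not_forall.1 hnm
  obtain ⟨r, rfl⟩ : ∃ r, n = r + 1 := ⟨n - 1, by omega⟩
  obtain ⟨K, hKne, hKcl, hKmap, hKdisj, -⟩ := aux_family hT htr hdense hx₀ r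
  obtain ⟨d, hd, hdsep⟩ := aux_sep (by omega : 0 < r + 1) K hKcl hKne hKdisj
  set δ : ℝ := d / 4 with hδ
  have hδpos : 0 < δ := by positivity
  refine ⟨δ, hδpos, Set.univ, ?_, ?_⟩
  · refine ⟨Set.univ, Set.univ, fun l => ⟨0, Set.subset_univ _⟩,
      ⟨0, fun k => ⟨k, trivial, le_refl _, by omega⟩⟩, by simp⟩
  · intro U hUo hUne l
    set G : Fin (r + 1) → Set X := fun i => Metric.thickening δ (K i) with hG
    have hsyn := aux_syndetic_inter hT htr hdense hUo hUne K G hKne hKmap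
      (fun i => Metric.isOpen_thickening)
      (fun i => Metric.self_subset_thickening hδpos _) (r + 1) l
    obtain ⟨N, hN⟩ := hsyn
    obtain ⟨m, hm, -, -⟩ := hN 0
    have hm' : ∀ i : Fin (r + 1), ∃ x ∈ U, ∀ s ≤ l, T^[m + s] x ∈ G i :=
      fun i => hm i i.isLt
    choose x hxU hxG using hm'
    refine ⟨x, hxU, m, ?_⟩
    intro k hk i j hij
    have hkl : k ≤ l := hk.2.2
    obtain ⟨p, hpK, hpd⟩ := Metric.mem_thickening_iff.1 (hxG i k hkl)
    obtain ⟨q, hqK, hqd⟩ := Metric.mem_thickening_iff.1 (hxG j k hkl)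
    have h1 : d ≤ dist p q := hdsep i j hij p hpK q hqK
    have h2 : dist p q ≤ dist p (T^[m + k] (x i)) + dist (T^[m + k] (x i)) (T^[m + k] (x j)) +
        dist (T^[m + k] (x j)) q := dist_triangle4 p _ _ q
    have h3 : dist p (T^[m + k] (x i)) = dist (T^[m + k] (x i)) p := dist_comm _ _
    have h4 : dist (T^[m + k] (x j)) q = dist (T^[m + k] (x j)) q := rfl
    rw [hδ]
    rw [hδ] at hpd hqd
    linarith
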